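/- Let P(t) be a monic polynomial of degree n over a field K with companion matrix C(P), and let α, β ∈ K. Then the 2n×2n block matrix [[αI_n, C(P)],[I_n, βI_n]] is similar to the companion matrix of the polynomial P((t−α)(t−β)), a monic polynomial of degree 2n. -/

import Mathlib

open Polynomial

/-- The companion matrix of a monic polynomial `P = t^n - a_{n-1} t^{n-1} - ⋯ - a_1 t - a_0`,
with ones on the subdiagonal and the `a_i` (i.e. `-(P.coeff i)`) in the last column. -/
def companion {K : Type*} [Field K] (n : ℕ) (P : Polynomial K) :
    Matrix (Fin n) (Fin n) K := fun i j =>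
  if (j : ℕ) = n - 1 then -(P.coeff i) else if (i : ℕ) = (j : ℕ) + 1 then 1 else 0

namespace CompanionAux

open Matrix

variable {K : Type*} [Field K]

lemma companion_apply {n : ℕ} (P : K[X]) (i j : Fin n) :
    companion n P i j
      = if (j : ℕ) = n - 1 then -(P.coeff i) else if (i : ℕ) = (j : ℕ) + 1 then 1 else 0 := rfl

/-- helper: sum of matrices applied to a vector -/
lemma sum_mulVec {m l : Type*} [Fintype m] [Fintype l] {ι : Type*} (s : Finset ι)
    (A : ι → Matrix m l K) (v : l → K) :
    (∑ i ∈ s, A i) *ᵥ v = ∑ i ∈ s, (A i *ᵥ v) := by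
  ext j
  simp only [Matrix.mulVec, dotProduct, Finset.sum_apply, Matrix.sum_apply,
    Finset.sum_mul]
  exact Finset.sum_comm

lemma companion_mulVec_single {n : ℕ} (P : K[X]) (k : Fin n) (hk : (k : ℕ) < n - 1) :
    companion n P *ᵥ Pi.single k 1 = Pi.single (⟨(k : ℕ) + 1, by omega⟩ : Fin n) 1 := by
  ext i
  simp only [Matrix.mulVec_single_one, Matrix.col_apply]
  rw [companion_apply, if_neg (by omega)]
  by_cases h : (i : ℕ) = (k : ℕ) + 1
  · rw [if_pos h]
    have hi : i = (⟨(k : ℕ) + 1, by omega⟩ : Fin n) := Fin.ext h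
    rw [hi, Pi.single_eq_same]
  · rw [if_neg h, Pi.single_eq_of_ne (fun hc => h (congrArg Fin.val hc))]

lemma companion_mulVec_last {n : ℕ} (hn : 0 < n) (P : K[X]) :
    companion n P *ᵥ Pi.single (⟨n - 1, by omega⟩ : Fin n) 1
      = fun i : Fin n => -(P.coeff (i : ℕ)) := by
  ext i
  simp only [Matrix.mulVec_single_one, Matrix.col_apply]
  rw [companion_apply, if_pos rfl]

lemma companion_pow_mulVec {n : ℕ} (P : K[X]) (hn : 0 < n) (k : ℕ) (hk : k < n) :
    (companion n P) ^ k *ᵥ Pi.single (⟨0, hn⟩ : Fin n) 1 = Pi.single (⟨k, hk⟩ : Fin n) 1 := by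
  induction k with
  | zero => rw [pow_zero, Matrix.one_mulVec]
  | succ m ih =>
      have hm : m < n := by omega
      rw [pow_succ', ← Matrix.mulVec_mulVec, ih hm,
        companion_mulVec_single P ⟨m, hm⟩ (show m < n - 1 by omega)]

lemma aeval_monic {A : Type*} [Ring A] [Algebra K A] {P : K[X]} (hP : P.Monic) {n : ℕ}
    (hd : P.natDegree = n) (x : A) :
    aeval x P = x ^ n + ∑ i : Fin n, P.coeff (i : ℕ) • x ^ (i : ℕ) := by
  have h := aeval_eq_sum_range (p := P) x
  rw [hd] at h
  rw [h, Finset.sum_range_succ]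
  have hc : P.coeff n = 1 := by
    have := hP.coeff_natDegree
    rwa [hd] at this
  rw [hc, one_smul, add_comm, Fin.sum_univ_eq_sum_range (fun i => P.coeff i • x ^ i)]

lemma aeval_companion {n : ℕ} {P : K[X]} (hP : P.Monic) (hd : P.natDegree = n) (hn : 0 < n) :
    aeval (companion n P) P = 0 := by
  set Cp := companion n P with hCp
  set v₀ : Fin n → K := Pi.single (⟨0, hn⟩ : Fin n) 1 with hv
  have key : (aeval Cp P) *ᵥ v₀ = 0 := by
    rw [aeval_monic hP hd, Matrix.add_mulVec, sum_mulVec]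
    have h1 : Cp ^ n *ᵥ v₀ = fun i : Fin n => -(P.coeff (i : ℕ)) := by
      have hpow : Cp ^ n = Cp * Cp ^ (n - 1) := by
        rw [← pow_succ']
        congr 1
        omega
      rw [hpow, ← Matrix.mulVec_mulVec, hv, companion_pow_mulVec P hn (n - 1) (by omega),
        hCp, companion_mulVec_last hn P]
    have h2 : ∀ i : Fin n, (P.coeff (i : ℕ) • Cp ^ (i : ℕ)) *ᵥ v₀
        = P.coeff (i : ℕ) • (Pi.single i 1 : Fin n → K) := by
      intro i
      rw [Matrix.smul_mulVec, hv, companion_pow_mulVec P hn (i : ℕ) i.isLt, Fin.eta]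
    rw [Finset.sum_congr rfl (fun i _ => h2 i), h1]
    ext j
    simp only [Pi.add_apply, Finset.sum_apply, Pi.smul_apply, smul_eq_mul, Pi.zero_apply]
    have h3 : ∑ i : Fin n, P.coeff (i : ℕ) * (Pi.single i 1 : Fin n → K) j
        = P.coeff (j : ℕ) := by
      rw [Finset.sum_eq_single j]
      · rw [Pi.single_eq_same, mul_one]
      · intro i _ hij
        rw [Pi.single_eq_of_ne (fun hc => hij hc.symm), mul_zero]
      · intro h
        exact absurd (Finset.mem_univ j) h
    rw [h3]
    ring
  -- now every column
  ext i j
  have hcol : (aeval Cp P) *ᵥ Pi.single j 1 = 0 := by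
    have hj : Pi.single j (1 : K) = Cp ^ (j : ℕ) *ᵥ v₀ := by
      rw [hv, companion_pow_mulVec P hn (j : ℕ) j.isLt, Fin.eta]
    have hcomm : aeval Cp P * Cp ^ (j : ℕ) = Cp ^ (j : ℕ) * aeval Cp P := by
      have e1 : aeval Cp (P * X ^ (j : ℕ)) = aeval Cp P * Cp ^ (j : ℕ) := by
        simp [_root_.map_mul, map_pow]
      have e2 : aeval Cp (X ^ (j : ℕ) * P) = Cp ^ (j : ℕ) * aeval Cp P := by
        simp [_root_.map_mul, map_pow]
      rw [← e1, ← e2, mul_comm]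
    rw [hj, Matrix.mulVec_mulVec, hcomm, ← Matrix.mulVec_mulVec, key, Matrix.mulVec_zero]
  have h4 := congrFun hcol i
  simp only [Matrix.mulVec_single, mul_one, Pi.zero_apply] at h4
  simpa using h4

/-- the diagonal "pair" algebra homomorphism `A ↦ fromBlocks A 0 0 A` -/
def diagPair (n : ℕ) : Matrix (Fin n) (Fin n) K →ₐ[K] Matrix (Fin n ⊕ Fin n) (Fin n ⊕ Fin n) K where
  toFun A := Matrix.fromBlocks A 0 0 A
  map_one' := by
    show Matrix.fromBlocks 1 0 0 1 = 1
    exact Matrix.fromBlocks_one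
  map_mul' A B := by
    show Matrix.fromBlocks (A * B) 0 0 (A * B)
      = Matrix.fromBlocks A 0 0 A * Matrix.fromBlocks B 0 0 B
    rw [Matrix.fromBlocks_multiply]
    simp
  map_zero' := by
    show Matrix.fromBlocks 0 0 0 0 = (0 : Matrix (Fin n ⊕ Fin n) (Fin n ⊕ Fin n) K)
    exact Matrix.fromBlocks_zero
  map_add' A B := by
    show Matrix.fromBlocks (A + B) 0 0 (A + B)
      = Matrix.fromBlocks A 0 0 A + Matrix.fromBlocks B 0 0 B
    rw [Matrix.fromBlocks_add]
    simp
  commutes' r := by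
    ext (i | i) (j | j) <;>
      simp [Matrix.algebraMap_matrix_apply, Matrix.fromBlocks]

lemma reindex_mulVec_single {m l : Type*} [Fintype m] [Fintype l] [DecidableEq m] [DecidableEq l]
    (e : m ≃ l) (A : Matrix m m K) (x y : m) (h : A *ᵥ Pi.single x 1 = Pi.single y 1) :
    (Matrix.reindex e e A) *ᵥ Pi.single (e x) 1 = Pi.single (e y) 1 := by
  have hv : (Pi.single (e x) (1:K)) ∘ e = Pi.single x 1 := by
    funext z
    simp only [Function.comp_apply, Pi.single_apply, Equiv.apply_eq_iff_eq]
  rw [Matrix.reindex_apply, Matrix.submatrix_mulVec_equiv]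
  rw [Equiv.symm_symm, hv, h]
  funext i
  simp only [Function.comp_apply, Pi.single_apply, Equiv.symm_apply_eq]

lemma single_sum_inl {n : ℕ} (x : Fin n) :
    (Pi.single (Sum.inl x : Fin n ⊕ Fin n) (1:K))
      = Sum.elim (Pi.single x (1:K)) (0 : Fin n → K) := by
  ext (y | y) <;> simp [Pi.single_apply]

lemma single_sum_inr {n : ℕ} (x : Fin n) :
    (Pi.single (Sum.inr x : Fin n ⊕ Fin n) (1:K))
      = Sum.elim (0 : Fin n → K) (Pi.single x (1:K)) := by
  ext (y | y) <;> simp [Pi.single_apply]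

end CompanionAux

open CompanionAux Matrix

theorem stmt_5 {K : Type*} [Field K] {n : ℕ} (P : Polynomial K) (hP : P.Monic)
    (hdeg : P.natDegree = n) (α β : K) :
    ((P.comp ((X - C α) * (X - C β))).Monic ∧ (P.comp ((X - C α) * (X - C β))).natDegree = 2 * n) ∧
    ∃ (e : (Fin n ⊕ Fin n) ≃ Fin (2 * n)) (S : Matrix (Fin (2 * n)) (Fin (2 * n)) K),
      IsUnit S ∧
      Matrix.reindex e e
          (Matrix.fromBlocks (α • 1) (companion n P) 1 (β • (1 : Matrix (Fin n) (Fin n) K))) =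
        S * companion (2 * n) (P.comp ((X - C α) * (X - C β))) * S⁻¹ := by
  have hqm : ((X - C α) * (X - C β)).Monic := (monic_X_sub_C α).mul (monic_X_sub_C β)
  have hqd : ((X - C α) * (X - C β)).natDegree = 2 := by
    rw [natDegree_mul (X_sub_C_ne_zero α) (X_sub_C_ne_zero β), natDegree_X_sub_C,
      natDegree_X_sub_C]
  have hQm : (P.comp ((X - C α) * (X - C β))).Monic := hP.comp hqm (by rw [hqd]; omega)
  have hQd : (P.comp ((X - C α) * (X - C β))).natDegree = 2 * n := by
    rw [natDegree_comp, hdeg, hqd, Nat.mul_comm]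
  refine ⟨⟨hQm, hQd⟩, ?_⟩
  set e : (Fin n ⊕ Fin n) ≃ Fin (2 * n) := finSumFinEquiv.trans (finCongr (by omega)) with he
  rcases Nat.eq_zero_or_pos n with hn | hn
  · refine ⟨e, 1, isUnit_one, ?_⟩
    ext i j
    exact absurd i.isLt (by omega)
  · -- main case: n positive
    set Q : K[X] := P.comp ((X - C α) * (X - C β)) with hQ
    set Cp := companion n P with hCp
    set M : Matrix (Fin n ⊕ Fin n) (Fin n ⊕ Fin n) K :=
      fromBlocks (α • 1) Cp 1 (β • 1) with hM
    set M' : Matrix (Fin (2 * n)) (Fin (2 * n)) K := reindex e e M with hM'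
    -- block identities
    have hMα : M - α • 1 = fromBlocks 0 Cp 1 ((β - α) • 1) := by
      rw [hM]
      ext (i | i) (j | j) <;>
        simp [Matrix.one_apply, Matrix.smul_apply, smul_eq_mul, Pi.single_apply] <;>
        split_ifs <;> ring
    have hMβ : M - β • 1 = fromBlocks ((α - β) • 1) Cp 1 0 := by
      rw [hM]
      ext (i | i) (j | j) <;>
        simp [Matrix.one_apply, Matrix.smul_apply, smul_eq_mul, Pi.single_apply] <;>
        split_ifs <;> ring
    have hblock : (M - α • 1) * (M - β • 1) = fromBlocks Cp 0 0 Cp := by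
      have h21 : (1 : Matrix (Fin n) (Fin n) K) * ((α - β) • 1) + ((β - α) • 1) * 1 = 0 := by
        rw [Matrix.one_mul, Matrix.mul_one, ← add_smul]
        have h0 : (α - β) + (β - α) = 0 := by ring
        rw [h0, zero_smul]
      rw [hMα, hMβ, fromBlocks_multiply, h21]
      simp
    -- the reindexing algebra equivalence
    have hE : ∀ A : Matrix (Fin n ⊕ Fin n) (Fin n ⊕ Fin n) K,
        Matrix.reindexAlgEquiv K K e A = reindex e e A := fun A => rfl
    have hsub : ∀ γ : K, M' - γ • 1 = reindex e e (M - γ • 1) := by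
      intro γ
      calc M' - γ • 1
          = Matrix.reindexAlgEquiv K K e M - γ • Matrix.reindexAlgEquiv K K e 1 := by
            rw [hE, _root_.map_one, hM']
        _ = Matrix.reindexAlgEquiv K K e (M - γ • 1) := by
            rw [map_sub, _root_.map_smul]
        _ = reindex e e (M - γ • 1) := hE _
    have hqev : aeval M' ((X - C α) * (X - C β)) = reindex e e (fromBlocks Cp 0 0 Cp) := by
      rw [_root_.map_mul, map_sub, map_sub, aeval_X, aeval_C, aeval_C,
        Algebra.algebraMap_eq_smul_one, Algebra.algebraMap_eq_smul_one,
        hsub α, hsub β, ← hE, ← hE, ← _root_.map_mul, hblock, hE]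
    -- `aeval M' Q = 0`
    have hdiag : ∀ A : Matrix (Fin n) (Fin n) K,
        diagPair n A = fromBlocks A 0 0 A := fun A => rfl
    have hQaeval : aeval M' Q = 0 := by
      rw [hQ, aeval_comp, hqev, ← hE, ← hdiag, aeval_algHom_apply, aeval_algHom_apply,
        aeval_companion hP hdeg hn, map_zero, map_zero]
    -- the similarity matrix
    set i₀ : Fin (2 * n) := e (Sum.inl ⟨0, hn⟩) with hi₀
    set v₀ : Fin (2 * n) → K := Pi.single i₀ 1 with hv₀
    set S : Matrix (Fin (2 * n)) (Fin (2 * n)) K :=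
      Matrix.of (fun i j => ((M' ^ (j : ℕ)) *ᵥ v₀) i) with hS
    have hSapp : ∀ i j : Fin (2 * n), S i j = ((M' ^ (j : ℕ)) *ᵥ v₀) i := fun i j => rfl
    -- the intertwining identity
    have hMS : M' * S = S * companion (2 * n) Q := by
      ext i j
      have hl : (M' * S) i j = ((M' ^ ((j : ℕ) + 1)) *ᵥ v₀) i := by
        rw [Matrix.mul_apply]
        calc ∑ k, M' i k * S k j = (M' *ᵥ ((M' ^ (j : ℕ)) *ᵥ v₀)) i := rfl
          _ = ((M' * M' ^ (j : ℕ)) *ᵥ v₀) i := by rw [Matrix.mulVec_mulVec]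
          _ = ((M' ^ ((j : ℕ) + 1)) *ᵥ v₀) i := by rw [← pow_succ']
      rw [hl, Matrix.mul_apply]
      by_cases hj : (j : ℕ) = 2 * n - 1
      · have hcq : ∀ k : Fin (2 * n), companion (2 * n) Q k j = -(Q.coeff (k : ℕ)) := by
          intro k
          rw [companion_apply, if_pos hj]
        rw [Finset.sum_congr rfl (fun k _ => by rw [hcq k])]
        have hpow : M' ^ ((j : ℕ) + 1) = M' ^ (2 * n) := by
          congr 1
          omega
        have hkey : M' ^ (2 * n) = -∑ k : Fin (2 * n), Q.coeff (k : ℕ) • M' ^ (k : ℕ) := by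
          have h0 := aeval_monic hQm hQd M'
          rw [hQaeval] at h0
          exact eq_neg_of_add_eq_zero_left h0.symm
        rw [hpow, hkey, Matrix.neg_mulVec, CompanionAux.sum_mulVec]
        simp only [Pi.neg_apply, Finset.sum_apply, Matrix.smul_mulVec, Pi.smul_apply,
          smul_eq_mul]
        rw [← Finset.sum_neg_distrib]
        refine Finset.sum_congr rfl fun k _ => ?_
        rw [hSapp]
        ring
      · have hj1 : (j : ℕ) + 1 < 2 * n := by omega
        have hcq : ∀ k : Fin (2 * n),
            companion (2 * n) Q k j = if k = (⟨(j : ℕ) + 1, hj1⟩ : Fin (2 * n)) then 1 else 0 := by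
          intro k
          rw [companion_apply, if_neg hj]
          by_cases h : (k : ℕ) = (j : ℕ) + 1
          · rw [if_pos h, if_pos (Fin.ext h)]
          · rw [if_neg h, if_neg (fun hc => h (congrArg Fin.val hc))]
        rw [Finset.sum_congr rfl (fun k _ => by rw [hcq k])]
        simp only [mul_ite, mul_one, mul_zero]
        rw [Finset.sum_ite_eq' Finset.univ (⟨(j : ℕ) + 1, hj1⟩ : Fin (2 * n)) (fun k => S i k),
          if_pos (Finset.mem_univ _)]
        exact (hSapp i ⟨(j : ℕ) + 1, hj1⟩).symm
    -- powers of the evaluated quadratic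
    have hpowq : ∀ k : ℕ, aeval M' (((X - C α) * (X - C β)) ^ k)
        = reindex e e (fromBlocks (Cp ^ k) 0 0 (Cp ^ k)) := by
      intro k
      rw [map_pow, hqev]
      have h1 : (fromBlocks Cp 0 0 Cp : Matrix (Fin n ⊕ Fin n) (Fin n ⊕ Fin n) K) ^ k
          = fromBlocks (Cp ^ k) 0 0 (Cp ^ k) := by
        rw [← hdiag, ← hdiag, ← map_pow]
      rw [← hE, ← map_pow, h1, hE]
    -- block mulVec computations
    have hbl : ∀ (A : Matrix (Fin n) (Fin n) K) (x y : Fin n),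
        A *ᵥ Pi.single x 1 = Pi.single y 1 →
        (fromBlocks A 0 0 A : Matrix (Fin n ⊕ Fin n) (Fin n ⊕ Fin n) K) *ᵥ
          Pi.single (Sum.inl x) 1 = Pi.single (Sum.inl y) 1 := by
      intro A x y h
      rw [single_sum_inl, fromBlocks_mulVec]
      simp only [Sum.elim_comp_inl, Sum.elim_comp_inr, Matrix.mulVec_zero, Matrix.zero_mulVec,
        add_zero, zero_add, h]
      rw [← single_sum_inl]
    have hbr : ∀ (A : Matrix (Fin n) (Fin n) K) (x y : Fin n),
        A *ᵥ Pi.single x 1 = Pi.single y 1 →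
        (fromBlocks A 0 0 A : Matrix (Fin n ⊕ Fin n) (Fin n ⊕ Fin n) K) *ᵥ
          Pi.single (Sum.inr x) 1 = Pi.single (Sum.inr y) 1 := by
      intro A x y h
      rw [single_sum_inr, fromBlocks_mulVec]
      simp only [Sum.elim_comp_inl, Sum.elim_comp_inr, Matrix.mulVec_zero, Matrix.zero_mulVec,
        add_zero, zero_add, h]
      rw [← single_sum_inr]
    have hCpPow : ∀ k : Fin n, Cp ^ (k : ℕ) *ᵥ Pi.single (⟨0, hn⟩ : Fin n) 1 = Pi.single k 1 := by
      intro k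
      rw [hCp, companion_pow_mulVec P hn (k : ℕ) k.isLt, Fin.eta]
    -- the first step for the second block
    have hstep : (M' - α • 1) *ᵥ v₀ = Pi.single (e (Sum.inr ⟨0, hn⟩)) 1 := by
      rw [hsub α, hv₀, hi₀]
      refine reindex_mulVec_single e _ _ _ ?_
      rw [hMα, single_sum_inl, fromBlocks_mulVec]
      simp only [Sum.elim_comp_inl, Sum.elim_comp_inr, Matrix.mulVec_zero, Matrix.zero_mulVec,
        add_zero, zero_add, Matrix.one_mulVec]
      rw [← single_sum_inr]
    -- the polynomials giving the inverse
    set r : Fin n ⊕ Fin n → K[X] :=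
      Sum.elim (fun k : Fin n => ((X - C α) * (X - C β)) ^ (k : ℕ))
               (fun k : Fin n => ((X - C α) * (X - C β)) ^ (k : ℕ) * (X - C α)) with hr
    have hrdeg : ∀ b, (r b).natDegree < 2 * n := by
      rintro (k | k)
      · rw [hr]
        simp only [Sum.elim_inl]
        rw [natDegree_pow, hqd]
        omega
      · rw [hr]
        simp only [Sum.elim_inr]
        rw [natDegree_mul (pow_ne_zero _ hqm.ne_zero) (X_sub_C_ne_zero α),
          natDegree_pow, hqd, natDegree_X_sub_C]
        omega
    have hrv : ∀ b, (aeval M' (r b)) *ᵥ v₀ = Pi.single (e b) 1 := by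
      rintro (k | k)
      · rw [hr]
        simp only [Sum.elim_inl]
        rw [hpowq (k : ℕ), hv₀, hi₀]
        exact reindex_mulVec_single e _ _ _ (hbl _ _ _ (hCpPow k))
      · rw [hr]
        simp only [Sum.elim_inr]
        rw [_root_.map_mul, hpowq (k : ℕ)]
        have haX : aeval M' (X - C α) = M' - α • 1 := by
          rw [map_sub, aeval_X, aeval_C, Algebra.algebraMap_eq_smul_one]
        rw [haX, ← Matrix.mulVec_mulVec, hstep]
        exact reindex_mulVec_single e _ _ _ (hbr _ _ _ (hCpPow k))
    set T : Matrix (Fin (2 * n)) (Fin (2 * n)) K :=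
      Matrix.of (fun i j => (r (e.symm j)).coeff (i : ℕ)) with hT
    have hST : S * T = 1 := by
      ext i j
      rw [Matrix.mul_apply, Matrix.one_apply]
      have hsum : ∑ k : Fin (2 * n), S i k * T k j
          = ((aeval M' (r (e.symm j))) *ᵥ v₀) i := by
        rw [aeval_eq_sum_range' (hrdeg (e.symm j)) M', CompanionAux.sum_mulVec]
        simp only [Finset.sum_apply, Matrix.smul_mulVec, Pi.smul_apply, smul_eq_mul]
        rw [← Fin.sum_univ_eq_sum_range
          (fun m => (r (e.symm j)).coeff m * ((M' ^ m) *ᵥ v₀) i)]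
        refine Finset.sum_congr rfl fun k _ => ?_
        rw [hSapp]
        show ((M' ^ (k : ℕ)) *ᵥ v₀) i * (r (e.symm j)).coeff (k : ℕ) = _
        ring
      rw [hsum, hrv (e.symm j), Equiv.apply_symm_apply, Pi.single_apply]
    have hSunit : IsUnit S := (Matrix.isUnit_iff_isUnit_det S).mpr (Matrix.isUnit_det_of_right_inverse hST)
    refine ⟨e, S, hSunit, ?_⟩
    have hdet : IsUnit S.det := (Matrix.isUnit_iff_isUnit_det S).mp hSunit
    calc reindex e e M = M' * (S * S⁻¹) := by
          rw [Matrix.mul_nonsing_inv S hdet, Matrix.mul_one, hM']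
      _ = (M' * S) * S⁻¹ := by rw [Matrix.mul_assoc]
      _ = S * companion (2 * n) Q * S⁻¹ := by rw [hMS]
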